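/- arXiv:1509.07574 — 2 statements merged into one kernel-verified Lean document; each statement's English description precedes it below -/
import Mathlib

section
/- Let G be a group, let H be a normal subgroup of G of finite index, and let p be an ultrafilter on G lying in the topological closure (in βG) of the set of idempotent ultrafilters {q ∈ βG : q·q = q}. Then H ∈ p (i.e., the underlying set of H belongs to p). -/
open Filter

/-- The sum of two ultrafilters on an additive structure:
`E ∈ p + q` iff `{u | {v | u + v ∈ E} ∈ q} ∈ p`. -/
def uadd {R : Type*} [Add R] (p q : Ultrafilter R) : Ultrafilter R :=
  p.bind fun u => q.map fun v => u + v

/-- The product of two ultrafilters on a multiplicative structure: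
`E ∈ p · q` iff `{u | {v | u · v ∈ E} ∈ q} ∈ p`. -/
def umul {R : Type*} [Mul R] (p q : Ultrafilter R) : Ultrafilter R :=
  p.bind fun u => q.map fun v => u * v

/-- A set of ultrafilters is additively invariant if it is stable under `q ↦ pure v + q`. -/
def addInvariant {R : Type*} [Add R] (Y : Set (Ultrafilter R)) : Prop :=
  ∀ v : R, ∀ q ∈ Y, uadd (pure v) q ∈ Y

/-- A set of ultrafilters is multiplicatively invariant if it is stable under
`q ↦ pure u · q` for all `u ≠ 0`. -/
def mulInvariant {R : Type*} [Mul R] [Zero R] (Y : Set (Ultrafilter R)) : Prop :=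
  ∀ u : R, u ≠ 0 → ∀ q ∈ Y, umul (pure u) q ∈ Y

/-- The set of additive minimal idempotent ultrafilters: nonprincipal additive idempotents
belonging to some minimal nonempty closed additively invariant set. -/
def AMI (R : Type*) [Add R] : Set (Ultrafilter R) :=
  {p | (∀ u : R, p ≠ pure u) ∧ uadd p p = p ∧
    ∃ Y : Set (Ultrafilter R), p ∈ Y ∧ IsClosed Y ∧ addInvariant Y ∧
      ∀ Z ⊆ Y, Z.Nonempty → IsClosed Z → addInvariant Z → Z = Y}

/-- The set of multiplicative minimal idempotent ultrafilters: nonprincipal multiplicative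
idempotents containing `R \ {0}` and belonging to some minimal nonempty closed
multiplicatively invariant set of ultrafilters containing `R \ {0}`. -/
def MMI (R : Type*) [Mul R] [Zero R] : Set (Ultrafilter R) :=
  {p | (∀ u : R, p ≠ pure u) ∧ {u : R | u ≠ 0} ∈ p ∧ umul p p = p ∧
    ∃ Y : Set (Ultrafilter R), p ∈ Y ∧ IsClosed Y ∧ (∀ q ∈ Y, {u : R | u ≠ 0} ∈ q) ∧
      mulInvariant Y ∧ ∀ Z ⊆ Y, Z.Nonempty → IsClosed Z → mulInvariant Z → Z = Y}

/-- The family 𝒢: ultrafilters in the closure of the additive minimal idempotents that are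
also multiplicative minimal idempotents. -/
def dcG (R : Type*) [Add R] [Mul R] [Zero R] : Set (Ultrafilter R) :=
  closure (AMI R) ∩ MMI R

lemma mem_umul {R : Type*} [Mul R] {p q : Ultrafilter R} {s : Set R} :
    s ∈ umul p q ↔ {u | {v | u * v ∈ s} ∈ q} ∈ p := Iff.rfl

lemma umul_map {R S : Type*} [Mul R] [Mul S] (φ : R →ₙ* S) (p q : Ultrafilter R) :
    Ultrafilter.map φ (umul p q) = umul (Ultrafilter.map φ p) (Ultrafilter.map φ q) := by
  ext s
  simp only [Ultrafilter.mem_map, mem_umul, Set.preimage_setOf_eq, Set.mem_setOf_eq]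
  constructor <;> intro h <;> filter_upwards [h] with u hu <;> · simpa [map_mul] using hu

lemma umul_pure {R : Type*} [Mul R] (x y : R) :
    umul (pure x : Ultrafilter R) (pure y) = pure (x * y) := by
  ext s
  simp [mem_umul]

/-- Let `G` be a group, `H` a normal subgroup of finite index, and `p` an
ultrafilter on `G` in the closure of the set of idempotent ultrafilters. Then `H ∈ p`. -/
theorem stmt10 {G : Type*} [Group G] (H : Subgroup G) [H.Normal] [H.FiniteIndex]
    (p : Ultrafilter G) (hp : p ∈ closure {q : Ultrafilter G | umul q q = q}) :
    (H : Set G) ∈ p := by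
  have hclosed : IsClosed {q : Ultrafilter G | (H : Set G) ∈ q} :=
    ultrafilter_isClosed_basic _
  have hsub : {q : Ultrafilter G | umul q q = q} ⊆ {q : Ultrafilter G | (H : Set G) ∈ q} := by
    intro q hq
    have hfin : Finite (G ⧸ H) := H.finite_quotient_of_finiteIndex
    set φ : G →ₙ* G ⧸ H := (QuotientGroup.mk' H).toMulHom
    have hmap : umul (Ultrafilter.map φ q) (Ultrafilter.map φ q) = Ultrafilter.map φ q := by
      rw [← umul_map, hq]
    obtain ⟨x, -, hx⟩ := Ultrafilter.eq_pure_of_finite_mem (Set.finite_univ (α := G ⧸ H))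
      (Ultrafilter.map φ q).univ_mem
    have hxx : x * x = x := by
      have := hmap
      rw [hx, umul_pure] at this
      exact Ultrafilter.pure_injective this
    have hx1 : x = 1 := by
      have := mul_right_cancel (a := x) (b := x) (c := 1)
      simpa [hxx] using this
    have hmem : φ ⁻¹' {(1 : G ⧸ H)} ∈ q := by
      have h1 : ({(1 : G ⧸ H)} : Set (G ⧸ H)) ∈ Ultrafilter.map φ q := by
        rw [hx, hx1]; exact Filter.mem_pure.mpr rfl
      exact h1
    have heq : φ ⁻¹' {(1 : G ⧸ H)} = (H : Set G) := by
      ext g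
      simp [φ, QuotientGroup.eq_one_iff]
    rwa [heq] at hmem
  exact closure_minimal hsub hclosed hp
end

section
/- Let R be a LID. Then every affinely thick set T ⊆ R is DC; that is, there exists an ultrafilter p ∈ 𝒢 with T ∈ p. -/
open Filter

/-- A countable infinite integral domain `R` is a large ideal domain (LID) when, for every
nonzero `x`, the ideal `xR` has finite index as an additive subgroup of `R`. -/
def IsLID (R : Type*) [CommRing R] : Prop :=
  ∀ x : R, x ≠ 0 → (Ideal.span ({x} : Set R)).toAddSubgroup.FiniteIndex

/-- A set `T ⊆ R` is affinely thick if for every finite collection of affine maps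
`x ↦ u·x + v` (with `u ≠ 0`) there is a single `x` sent into `T` by all of them. -/
def AffThick {R : Type*} [Mul R] [Add R] [Zero R] (T : Set R) : Prop :=
  ∀ F : Finset (R × R), (∀ g ∈ F, g.1 ≠ 0) → ∃ x : R, ∀ g ∈ F, g.1 * x + g.2 ∈ T

/-! ### Auxiliary development -/


set_option linter.unusedSectionVars false

attribute [local instance] Ultrafilter.add Ultrafilter.addSemigroup
attribute [local instance] Ultrafilter.mul Ultrafilter.semigroup

section Basic
variable {α β : Type*}

theorem mem_uadd' [Add α] {p q : Ultrafilter α} {E : Set α} :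
    E ∈ uadd p q ↔ {u | {v | u + v ∈ E} ∈ q} ∈ p := Iff.rfl

theorem uadd_eq' [AddSemigroup α] (p q : Ultrafilter α) : uadd p q = p + q := rfl
theorem umul_eq' [Semigroup α] (p q : Ultrafilter α) : umul p q = p * q := rfl

theorem uadd_assoc' [AddSemigroup α] (p q r : Ultrafilter α) :
    uadd (uadd p q) r = uadd p (uadd q r) := by
  simp only [uadd_eq']; exact add_assoc p q r

theorem continuous_uadd_left' [AddSemigroup α] (q : Ultrafilter α) :
    Continuous fun p => uadd p q := by
  have : (fun p : Ultrafilter α => uadd p q) = (· + q) := by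
    funext p; exact uadd_eq' p q
  rw [this]; exact Ultrafilter.continuous_add_left q

theorem continuous_umul_left' [Semigroup α] (q : Ultrafilter α) :
    Continuous fun p => umul p q := by
  have : (fun p : Ultrafilter α => umul p q) = (· * q) := by
    funext p; exact umul_eq' p q
  rw [this]; exact Ultrafilter.continuous_mul_left q

theorem pure_uadd' [Add α] (v : α) (q : Ultrafilter α) :
    uadd (pure v) q = q.map (v + ·) := rfl

theorem pure_umul' [Mul α] (v : α) (q : Ultrafilter α) :
    umul (pure v) q = q.map (v * ·) := rfl

theorem continuous_umap (f : α → β) : Continuous (Ultrafilter.map f) := by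
  refine ultrafilterBasis_is_basis.continuous_iff.2 ?_
  rintro o ⟨s, rfl⟩
  exact ultrafilter_isOpen_basic (f ⁻¹' s)

/-- An ultrafilter lies in the closure of the pure points of any of its members. -/
theorem mem_closure_pure_image {E : Set α} {p : Ultrafilter α} (hE : E ∈ p) :
    p ∈ closure ((pure : α → Ultrafilter α) '' E) := by
  rw [ultrafilterBasis_is_basis.mem_closure_iff]
  rintro o ⟨F, rfl⟩ hpo
  obtain ⟨x, hxF, hxE⟩ := Ultrafilter.nonempty_of_mem (inter_mem hpo hE)
  exact ⟨pure x, hxF, ⟨x, hxE, rfl⟩⟩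

/-- Closure absorption: a closed set invariant under `f ∘ pure` on `E` absorbs `f r`
for any ultrafilter `r` containing `E`. -/
theorem absorb_aux {Y : Set (Ultrafilter α)} (hc : IsClosed Y) {E : Set α}
    {f : Ultrafilter α → Ultrafilter α} (hcont : Continuous f)
    (hi : ∀ v ∈ E, f (pure v) ∈ Y) {r : Ultrafilter α} (hr : E ∈ r) : f r ∈ Y := by
  have h1 : f r ∈ closure (f '' ((pure : α → Ultrafilter α) '' E)) :=
    (image_closure_subset_closure_image hcont) ⟨r, mem_closure_pure_image hr, rfl⟩
  have h2 : f '' ((pure : α → Ultrafilter α) '' E) ⊆ Y := by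
    rintro _ ⟨_, ⟨v, hv, rfl⟩, rfl⟩; exact hi v hv
  exact hc.closure_eq ▸ closure_mono h2 h1

theorem umap_uadd [Add α] [Add β] {f : α → β} (hf : ∀ x y, f (x + y) = f x + f y)
    (p q : Ultrafilter α) :
    (uadd p q).map f = uadd (p.map f) (q.map f) := by
  apply Ultrafilter.coe_injective
  apply Filter.ext
  intro s
  simp only [Ultrafilter.mem_coe, Ultrafilter.mem_map, mem_uadd', Set.preimage_setOf_eq,
    Set.mem_preimage, hf]

theorem exists_umap_eq [Nonempty α] {f : α → β} {q : Ultrafilter β}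
    (hq : Set.range f ∈ q) : ∃ q₀ : Ultrafilter α, q = q₀.map f := by
  refine ⟨q.map (Function.invFun f), ?_⟩
  apply Ultrafilter.coe_injective
  rw [Ultrafilter.coe_map, Ultrafilter.coe_map, Filter.map_map]
  symm
  calc Filter.map (f ∘ Function.invFun f) ↑q = Filter.map id ↑q := by
        apply Filter.map_congr
        filter_upwards [hq] with x hx
        exact Function.invFun_eq hx
      _ = ↑q := Filter.map_id

end Basic

section NP
variable {α β : Type*}

/-- Nonprincipal ultrafilters. -/
def NP (α : Type*) : Set (Ultrafilter α) := {p | ∀ x : α, ({x}ᶜ : Set α) ∈ p}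

theorem isClosed_NP : IsClosed (NP α) := by
  have : NP α = ⋂ x : α, {p : Ultrafilter α | ({x}ᶜ : Set α) ∈ p} := by
    ext p; simp [NP]
  rw [this]
  exact isClosed_iInter fun x => ultrafilter_isClosed_basic _

theorem NP_nonempty [Infinite α] : (NP α).Nonempty := by
  refine ⟨Ultrafilter.of cofinite, fun x => ?_⟩
  exact Filter.le_def.mp (Ultrafilter.of_le cofinite)
    _ ((Set.finite_singleton x).compl_mem_cofinite)

theorem eq_pure_of_singleton_mem {p : Ultrafilter α} {x : α} (h : ({x} : Set α) ∈ p) :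
    p = pure x := by
  obtain ⟨y, hy, hp⟩ := Ultrafilter.eq_pure_of_finite_mem (Set.finite_singleton x) h
  rwa [Set.mem_singleton_iff.mp hy] at hp

theorem np_iff {p : Ultrafilter α} : p ∈ NP α ↔ ∀ x, p ≠ pure x := by
  constructor
  · intro hp x he
    have := hp x
    rw [he] at this
    simp [Ultrafilter.mem_pure] at this
  · intro h x
    by_contra hc
    exact h x (eq_pure_of_singleton_mem (Ultrafilter.compl_notMem_iff.mp hc))

theorem finite_notMem {p : Ultrafilter α} (hp : p ∈ NP α) {s : Set α} (hs : s.Finite) :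
    s ∉ p := by
  intro hmem
  obtain ⟨y, -, hy⟩ := Ultrafilter.eq_pure_of_finite_mem hs hmem
  exact (np_iff.mp hp) y hy

theorem ne_zero_mem_of_NP [Zero α] {p : Ultrafilter α} (hp : p ∈ NP α) :
    {u : α | u ≠ 0} ∈ p := by
  have := hp 0
  have he : ({(0:α)}ᶜ : Set α) = {u : α | u ≠ 0} := by ext y; simp
  rwa [he] at this

theorem umap_NP {f : α → β} (hf : Function.Injective f) {p : Ultrafilter α} (hp : p ∈ NP α) :
    p.map f ∈ NP β := by
  intro x
  rw [Ultrafilter.mem_map, Set.preimage_compl]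
  have : (f ⁻¹' {x}).Finite := Set.Finite.preimage hf.injOn (Set.finite_singleton x)
  exact (Ultrafilter.compl_mem_iff_notMem).mpr (finite_notMem hp this)

theorem uadd_mem_NP [AddGroup α] {p : Ultrafilter α} (hp : p ∈ NP α) (q : Ultrafilter α) :
    uadd p q ∈ NP α := by
  intro x
  have key : ∀ u : α, {v : α | u + v ∈ ({x}ᶜ : Set α)} = (({-u + x} : Set α))ᶜ := by
    intro u; ext v
    simp only [Set.mem_setOf_eq, Set.mem_compl_iff, Set.mem_singleton_iff]
    rw [not_iff_not, eq_neg_add_iff_add_eq]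
  show {u : α | {v | u + v ∈ ({x}ᶜ : Set α)} ∈ q} ∈ p
  set A := {u : α | {v | u + v ∈ ({x}ᶜ : Set α)} ∈ q} with hA
  have hsub : Set.Subsingleton Aᶜ := by
    intro u₁ h₁ u₂ h₂
    have h₁0 : {v | u₁ + v ∈ ({x}ᶜ : Set α)} ∉ q := h₁
    have h₂0 : {v | u₂ + v ∈ ({x}ᶜ : Set α)} ∉ q := h₂
    rw [key u₁] at h₁0
    rw [key u₂] at h₂0
    have g₁ : ({-u₁ + x} : Set α) ∈ q := (Ultrafilter.compl_notMem_iff).mp h₁0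
    have g₂ : ({-u₂ + x} : Set α) ∈ q := (Ultrafilter.compl_notMem_iff).mp h₂0
    obtain ⟨y, hy₁, hy₂⟩ := Ultrafilter.nonempty_of_mem (inter_mem g₁ g₂)
    rw [Set.mem_singleton_iff] at hy₁ hy₂
    have h3 : -u₁ + x = -u₂ + x := hy₁ ▸ hy₂
    exact neg_inj.mp (add_right_cancel h3)
  have : Aᶜ ∉ p := finite_notMem hp hsub.finite
  exact (Ultrafilter.compl_notMem_iff).mp this

end NP

section Zorn
variable {X : Type*} [TopologicalSpace X] [CompactSpace X]

theorem exists_minimal_invariant {ι : Sort*} (f : ι → X → X) {Y : Set X}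
    (hY : IsClosed Y) (hne : Y.Nonempty) (hinv : ∀ i, ∀ x ∈ Y, f i x ∈ Y) :
    ∃ M, M ⊆ Y ∧ M.Nonempty ∧ IsClosed M ∧ (∀ i, ∀ x ∈ M, f i x ∈ M) ∧
      ∀ Z ⊆ M, Z.Nonempty → IsClosed Z → (∀ i, ∀ x ∈ Z, f i x ∈ Z) → Z = M := by
  set S : Set (Set X) := {A | A ⊆ Y ∧ A.Nonempty ∧ IsClosed A ∧ ∀ i, ∀ x ∈ A, f i x ∈ A} with hS
  have hchain : ∀ c ⊆ S, IsChain (· ⊆ ·) c → c.Nonempty → ∃ lb ∈ S, ∀ s ∈ c, lb ⊆ s := by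
    intro c hcS hc hcne
    refine ⟨⋂₀ c, ⟨?_, ?_, ?_, ?_⟩, fun s hs => Set.sInter_subset_of_mem hs⟩
    · obtain ⟨t, ht⟩ := hcne
      exact (Set.sInter_subset_of_mem ht).trans (hcS ht).1
    · have : Nonempty c := hcne.coe_sort
      rw [Set.sInter_eq_iInter]
      exact IsCompact.nonempty_iInter_of_directed_nonempty_isCompact_isClosed
        (fun i : c => (i : Set X))
        (DirectedOn.directed_val (IsChain.directedOn hc.symm))
        (fun i => (hcS i.2).2.1)
        (fun i => (hcS i.2).2.2.1.isCompact)
        (fun i => (hcS i.2).2.2.1)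
    · exact isClosed_sInter fun s hs => (hcS hs).2.2.1
    · intro i x hx
      rw [Set.mem_sInter] at hx ⊢
      exact fun s hs => (hcS hs).2.2.2 i x (hx s hs)
  obtain ⟨M, hMY, hMmin⟩ := zorn_superset_nonempty S hchain Y ⟨subset_rfl, hne, hY, hinv⟩
  have hMS : M ∈ S := hMmin.1
  exact ⟨M, hMS.1, hMS.2.1, hMS.2.2.1, hMS.2.2.2, fun Z hZM hZne hZcl hZinv =>
    subset_antisymm hZM (hMmin.2 ⟨hZM.trans hMS.1, hZne, hZcl, hZinv⟩ hZM)⟩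

end Zorn

section Ellis
variable {α : Type*}

theorem exists_uadd_idem [AddSemigroup α] {s : Set (Ultrafilter α)} (hne : s.Nonempty)
    (hcl : IsClosed s) (hadd : ∀ x ∈ s, ∀ y ∈ s, uadd x y ∈ s) : ∃ p ∈ s, uadd p p = p :=
  exists_idempotent_in_compact_add_subsemigroup
    (fun r => Ultrafilter.continuous_add_left r) s hne hcl.isCompact hadd

theorem exists_umul_idem [Semigroup α] {s : Set (Ultrafilter α)} (hne : s.Nonempty)
    (hcl : IsClosed s) (hmul : ∀ x ∈ s, ∀ y ∈ s, umul x y ∈ s) : ∃ p ∈ s, umul p p = p :=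
  exists_idempotent_in_compact_subsemigroup
    (fun r => Ultrafilter.continuous_mul_left r) s hne hcl.isCompact hmul

end Ellis

section MainDev
variable {R : Type*} [CommRing R] [IsDomain R]

theorem absorb_add {Y : Set (Ultrafilter R)} (hc : IsClosed Y) (hi : addInvariant Y)
    {q : Ultrafilter R} (hq : q ∈ Y) (r : Ultrafilter R) : uadd r q ∈ Y :=
  absorb_aux hc (continuous_uadd_left' q) (fun v _ => hi v q hq) univ_mem

theorem absorb_mul {Y : Set (Ultrafilter R)} (hc : IsClosed Y) (hi : mulInvariant Y)
    {q : Ultrafilter R} (hq : q ∈ Y) {r : Ultrafilter R} (hr : {u : R | u ≠ 0} ∈ r) :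
    umul r q ∈ Y :=
  absorb_aux hc (continuous_umul_left' q) (fun v hv => hi v hv q hq) hr

/-- The set of ultrafilters containing every affine preimage of `T`. -/
def Tstar (T : Set R) : Set (Ultrafilter R) :=
  {p | ∀ u v : R, u ≠ 0 → {x | u * x + v ∈ T} ∈ p}

theorem isClosed_Tstar (T : Set R) : IsClosed (Tstar T) := by
  have : Tstar T = ⋂ (u : R) (v : R) (_ : u ≠ 0),
      {p : Ultrafilter R | {x | u * x + v ∈ T} ∈ p} := by
    ext p; simp [Tstar]
  rw [this]
  exact isClosed_iInter fun u => isClosed_iInter fun v =>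
    isClosed_iInter fun _ => ultrafilter_isClosed_basic _

theorem Tstar_nonempty {T : Set R} (hT : AffThick T) : (Tstar T).Nonempty := by
  classical
  set S : Set (Set R) := {A | ∃ g : R × R, g.1 ≠ 0 ∧ A = {x | g.1 * x + g.2 ∈ T}} with hS
  have hFIP : ∀ t ⊆ S, t.Finite → (⋂₀ t).Nonempty := by
    intro t hts ht
    have hsel : ∀ A ∈ t, ∃ g : R × R, g.1 ≠ 0 ∧ A = {x | g.1 * x + g.2 ∈ T} :=
      fun A hA => hts hA
    set gfun : Set R → R × R := fun A =>
      if h : A ∈ t then (hsel A h).choose else (1, 0) with hgfun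
    set F : Finset (R × R) := ht.toFinset.image gfun with hF
    have hF0 : ∀ g ∈ F, g.1 ≠ 0 := by
      intro g hg
      rw [hF, Finset.mem_image] at hg
      obtain ⟨A, hA, rfl⟩ := hg
      rw [Set.Finite.mem_toFinset] at hA
      rw [hgfun]; simp only [dif_pos hA]
      exact (hsel A hA).choose_spec.1
    obtain ⟨x, hx⟩ := hT F hF0
    refine ⟨x, ?_⟩
    rw [Set.mem_sInter]
    intro A hA
    have hmem : gfun A ∈ F := by
      rw [hF, Finset.mem_image]
      exact ⟨A, (Set.Finite.mem_toFinset ht).mpr hA, rfl⟩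
    have hgA : A = {x | (gfun A).1 * x + (gfun A).2 ∈ T} := by
      rw [hgfun]; simp only [dif_pos hA]
      exact (hsel A hA).choose_spec.2
    rw [hgA]
    exact hx _ hmem
  haveI : NeBot (Filter.generate S) := Filter.generate_neBot_iff.mpr hFIP
  refine ⟨Ultrafilter.of (Filter.generate S), ?_⟩
  intro u v hu
  have hmemS : {x | u * x + v ∈ T} ∈ Filter.generate S :=
    Filter.mem_generate_iff.mpr ⟨{{x | u * x + v ∈ T}}, by
      simp only [Set.singleton_subset_iff]; exact ⟨(u, v), hu, rfl⟩,
      Set.finite_singleton _, by simp⟩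
  exact Filter.le_def.mp (Ultrafilter.of_le _) _ hmemS

theorem mem_of_Tstar {T : Set R} {p : Ultrafilter R} (hp : p ∈ Tstar T) : T ∈ p := by
  have := hp 1 0 one_ne_zero
  simpa using this

theorem Tstar_addInvariant (T : Set R) : addInvariant (Tstar T) := by
  intro w q hq u v hu
  rw [pure_uadd', Ultrafilter.mem_map]
  have he : (fun x => w + x) ⁻¹' {x | u * x + v ∈ T} = {y | u * y + (u * w + v) ∈ T} := by
    ext y
    simp only [Set.mem_preimage, Set.mem_setOf_eq]
    have : u * (w + y) + v = u * y + (u * w + v) := by ring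
    rw [this]
  rw [he]
  exact hq u (u * w + v) hu

theorem Tstar_mulInvariant (T : Set R) : mulInvariant (Tstar T) := by
  intro w hw q hq u v hu
  rw [pure_umul', Ultrafilter.mem_map]
  have he : (fun x => w * x) ⁻¹' {x | u * x + v ∈ T} = {y | (u * w) * y + v ∈ T} := by
    ext y
    simp only [Set.mem_preimage, Set.mem_setOf_eq]
    have : u * (w * y) + v = (u * w) * y + v := by ring
    rw [this]
  rw [he]
  exact hq (u * w) v (mul_ne_zero hu hw)


/-- Key lemma (uses the LID hypothesis): multiplying an additive minimal idempotent by a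
nonzero constant yields again an additive minimal idempotent. -/
theorem umul_pure_mem_AMI (hLID : IsLID R) {u : R} (hu : u ≠ 0) {p : Ultrafilter R}
    (hp : p ∈ AMI R) : umul (pure u) p ∈ AMI R := by
  classical
  obtain ⟨hnp, hidem, Y, hpY, hYc, hYinv, hYmin⟩ := hp
  set f : R → R := fun x => u * x with hf
  have hfinj : Function.Injective f := mul_right_injective₀ hu
  have hfadd : ∀ x y : R, f (x + y) = f x + f y := fun x y => mul_add u x y
  rw [pure_umul']
  set p' := p.map f with hp'
  have hidem' : uadd p' p' = p' := by
    rw [hp', ← umap_uadd hfadd, hidem]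
  have hnp0 : p ∈ NP R := np_iff.mpr hnp
  have hnp' : p' ∈ NP R := umap_NP hfinj hnp0
  have habs : ∀ q ∈ Y, ∀ r, uadd r q ∈ Y := fun q hq r => absorb_add hYc hYinv hq r
  have hreach : ∀ q ∈ Y, ∃ t, uadd t q = p := by
    intro q hq
    have h1 : Set.range (fun r => uadd r q) ⊆ Y := by
      rintro _ ⟨r, rfl⟩; exact habs q hq r
    have h2 : (Set.range fun r => uadd r q) = Y := by
      refine hYmin _ h1 ⟨uadd q q, ⟨q, rfl⟩⟩
        ((isCompact_range (continuous_uadd_left' q)).isClosed) ?_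
      intro w s hs
      obtain ⟨r, hr⟩ := hs
      refine ⟨uadd (pure w) r, ?_⟩
      beta_reduce
      rw [uadd_assoc']
      exact congrArg _ hr
    have : p ∈ Set.range fun r => uadd r q := h2 ▸ hpY
    exact this
  -- decomposition of arbitrary ultrafilters using the finite index of `uR`
  have hdecomp : ∀ r : Ultrafilter R, ∃ v : R, ∃ s : Ultrafilter R,
      Set.range f ∈ s ∧ r = uadd (pure v) s := by
    intro r
    set H := (Ideal.span ({u} : Set R)).toAddSubgroup with hH
    haveI : H.FiniteIndex := hLID u hu
    haveI : Finite (R ⧸ H) := H.finite_quotient_of_finiteIndex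
    set mk : R → R ⧸ H := QuotientAddGroup.mk with hmk
    obtain ⟨c, -, hc⟩ := Ultrafilter.eq_pure_of_finite_mem Set.finite_univ
      (univ_mem (f := ((r.map mk : Ultrafilter (R ⧸ H)) : Filter (R ⧸ H))))
    obtain ⟨v, hv⟩ := QuotientAddGroup.mk_surjective c
    refine ⟨v, r.map (fun x => -v + x), ?_, ?_⟩
    · rw [Ultrafilter.mem_map]
      have hmemc : mk ⁻¹' {c} ∈ r := by
        have h1 : {c} ∈ r.map mk := by rw [hc]; exact Ultrafilter.mem_pure.mpr rfl
        rwa [Ultrafilter.mem_map] at h1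
      have hset : (fun x => -v + x) ⁻¹' Set.range f = mk ⁻¹' {c} := by
        ext x
        simp only [Set.mem_preimage, Set.mem_singleton_iff, ← hv]
        have h1 : -v + x ∈ Set.range f ↔ -v + x ∈ H := by
          rw [hH, Submodule.mem_toAddSubgroup, Ideal.mem_span_singleton, dvd_def]
          constructor
          · rintro ⟨y, hy⟩; exact ⟨y, hy.symm⟩
          · rintro ⟨y, hy⟩; exact ⟨y, hy.symm⟩
        have h2 : mk x = mk v ↔ -v + x ∈ H := by
          rw [hmk, QuotientAddGroup.eq]
          constructor
          · intro h; have h' := H.neg_mem h; rwa [neg_add_rev, neg_neg] at h'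
          · intro h; have h' := H.neg_mem h; rwa [neg_add_rev, neg_neg] at h'
        rw [h1, h2]
      rw [hset]
      exact hmemc
    · rw [pure_uadd', Ultrafilter.map_map]
      have hcomp : ((v + ·) ∘ (fun x => -v + x)) = id := by
        funext x; simp [add_neg_cancel_left]
      rw [hcomp, Ultrafilter.map_id]
  -- `p'` generates a minimal closed invariant set
  refine ⟨np_iff.mp hnp', hidem', Set.range (fun r => uadd r p'), ⟨p', hidem'⟩,
    (isCompact_range (continuous_uadd_left' p')).isClosed, ?_, ?_⟩
  · intro w s hs
    obtain ⟨r, hr⟩ := hs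
    refine ⟨uadd (pure w) r, ?_⟩
    show uadd (uadd (pure w) r) p' = uadd (pure w) s
    rw [uadd_assoc']
    exact congrArg _ hr
  · intro Z hZsub hZne hZcl hZinv
    obtain ⟨q, hqZ⟩ := hZne
    obtain ⟨r, hr⟩ := hZsub hqZ
    obtain ⟨v, s, hsI, hrvs⟩ := hdecomp r
    obtain ⟨s₀, hs₀⟩ := exists_umap_eq hsI
    have hq_eq : q = uadd (pure v) ((uadd s₀ p).map f) := by
      have hstep : uadd (uadd (pure v) s) p' = uadd (pure v) ((uadd s₀ p).map f) := by
        rw [uadd_assoc', hs₀, umap_uadd hfadd, ← hp']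
      rw [← hr, hrvs]
      exact hstep
    obtain ⟨t, ht⟩ := hreach (uadd s₀ p) (habs p hpY s₀)
    have hp'_eq : uadd (t.map f) ((uadd s₀ p).map f) = p' := by
      rw [← umap_uadd hfadd, ht]
    have key : uadd (uadd (t.map f) (pure (-v))) q = p' := by
      rw [hq_eq, uadd_assoc', ← uadd_assoc' (pure (-v)) (pure v) _]
      have h0 : uadd (pure (-v)) (pure v) = (pure (0 : R) : Ultrafilter R) := by
        rw [pure_uadd', Ultrafilter.map_pure, neg_add_cancel]
      rw [h0]
      have h1 : uadd (pure (0 : R)) ((uadd s₀ p).map f) = (uadd s₀ p).map f := by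
        rw [pure_uadd']
        have hz : (fun x : R => 0 + x) = id := by funext x; simp
        rw [hz, Ultrafilter.map_id]
      rw [h1, hp'_eq]
    refine subset_antisymm hZsub ?_
    rintro _ ⟨r', rfl⟩
    have : uadd r' p' = uadd (uadd r' (uadd (t.map f) (pure (-v)))) q := by
      rw [uadd_assoc', key]
    show uadd r' p' ∈ Z
    rw [this]
    exact absorb_add hZcl hZinv hqZ _


end MainDev

/-- In a LID `R`, every affinely thick set `T` is DC: some ultrafilter
`p ∈ 𝒢` contains `T`. -/
theorem stmt13 {R : Type*} [CommRing R] [IsDomain R] [Countable R] [Infinite R]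
    (hLID : IsLID R) (T : Set R) (hT : AffThick T) :
    ∃ p ∈ dcG R, T ∈ p := by
  classical
  obtain ⟨p₀, hp₀⟩ := Tstar_nonempty hT
  obtain ⟨n₀, hn₀⟩ := NP_nonempty (α := R)
  set Y₀ : Set (Ultrafilter R) := Tstar T ∩ NP R with hY₀
  have hY₀c : IsClosed Y₀ := (isClosed_Tstar T).inter isClosed_NP
  have hY₀ne : Y₀.Nonempty :=
    ⟨uadd n₀ p₀, absorb_add (isClosed_Tstar T) (Tstar_addInvariant T) hp₀ n₀,
      uadd_mem_NP hn₀ p₀⟩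
  have hY₀inv : addInvariant Y₀ := fun v q hq =>
    ⟨Tstar_addInvariant T v q hq.1, by
      rw [pure_uadd']; exact umap_NP (add_right_injective v) hq.2⟩
  obtain ⟨M, hMY₀, hMne, hMc, hMinv, hMmin⟩ := exists_minimal_invariant
    (fun v : R => uadd (pure v)) hY₀c hY₀ne (fun v q hq => hY₀inv v q hq)
  have hMadd : ∀ x ∈ M, ∀ y ∈ M, uadd x y ∈ M := fun x hx y hy =>
    absorb_add hMc hMinv hy x
  obtain ⟨p₁, hp₁M, hp₁idem⟩ := exists_uadd_idem hMne hMc hMadd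
  have hp₁Y₀ : p₁ ∈ Y₀ := hMY₀ hp₁M
  have hp₁AMI : p₁ ∈ AMI R := ⟨np_iff.mp hp₁Y₀.2, hp₁idem, M, hp₁M, hMc, hMinv, hMmin⟩
  -- the multiplicative stage
  set W : Set (Ultrafilter R) := closure (AMI R) ∩ Y₀ with hW
  have hWc : IsClosed W := isClosed_closure.inter hY₀c
  have hWne : W.Nonempty := ⟨p₁, subset_closure hp₁AMI, hp₁Y₀⟩
  have hclinv : mulInvariant (closure (AMI R)) := by
    intro u hu q hq
    rw [pure_umul']
    exact map_mem_closure (continuous_umap (u * ·)) hq (fun a ha => by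
      have := umul_pure_mem_AMI hLID hu ha
      rwa [pure_umul'] at this)
  have hWinv : mulInvariant W := by
    intro u hu q hq
    refine ⟨hclinv u hu q hq.1, Tstar_mulInvariant T u hu q hq.2.1, ?_⟩
    rw [pure_umul']
    exact umap_NP (mul_right_injective₀ hu) hq.2.2
  obtain ⟨M', hM'W, hM'ne, hM'c, hM'inv, hM'min⟩ := exists_minimal_invariant
    (fun i : {u : R // u ≠ 0} => umul (pure i.1)) hWc hWne
    (fun i q hq => hWinv i.1 i.2 q hq)
  have hM'minv : mulInvariant M' := fun u hu => hM'inv ⟨u, hu⟩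
  have hM'mul : ∀ x ∈ M', ∀ y ∈ M', umul x y ∈ M' := fun x hx y hy =>
    absorb_mul hM'c hM'minv hy (ne_zero_mem_of_NP (hM'W hx).2.2)
  obtain ⟨p₂, hp₂M', hp₂idem⟩ := exists_umul_idem hM'ne hM'c hM'mul
  have hp₂W : p₂ ∈ W := hM'W hp₂M'
  have hp₂NP : p₂ ∈ NP R := hp₂W.2.2
  refine ⟨p₂, ⟨hp₂W.1, ?_⟩, mem_of_Tstar hp₂W.2.1⟩
  exact ⟨np_iff.mp hp₂NP, ne_zero_mem_of_NP hp₂NP, hp₂idem, M', hp₂M', hM'c,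
    (fun q hq => ne_zero_mem_of_NP (hM'W hq).2.2), hM'minv,
    fun Z hZ hZne hZc hZi => hM'min Z hZ hZne hZc (fun i => hZi i.1 i.2)⟩
end
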